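/- For A ∈ R^{m×n} with singular values σ₁(A) ≥ σ₂(A) ≥ ..., and any subspaces U ⊆ R^m of dimension p and V ⊆ R^n of dimension q, the squared Frobenius norm of the projection of A onto U⊗V is at most σ₁(A)² + ... + σ_l(A)², where l = min(p,q,rank A); equality holds when U and V are spanned by the first l left and right singular vectors of A. -/

import Mathlib

open Finset
open scoped Matrix RealInnerProductSpace

lemma sum_rotX {α β γ : Type*} [Fintype α] [Fintype β] [Fintype γ] (f : α → β → γ → ℝ) :
    ∑ y : α, ∑ i : β, ∑ j : γ, f y i j = ∑ i, ∑ j, ∑ y, f y i j := by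
  rw [Finset.sum_comm]
  exact Finset.sum_congr rfl fun i _ => Finset.sum_comm

lemma sum_rot2X {α β γ δ : Type*} [Fintype α] [Fintype β] [Fintype γ] [Fintype δ]
    (f : α → β → γ → δ → ℝ) :
    ∑ x : α, ∑ y : β, ∑ i : γ, ∑ j : δ, f x y i j = ∑ i, ∑ j, ∑ x, ∑ y, f x y i j := by
  have h2 : ∀ x, ∑ y : β, ∑ i : γ, ∑ j : δ, f x y i j = ∑ i, ∑ j, ∑ y, f x y i j :=
    fun x => sum_rotX _
  simp only [h2]
  exact sum_rotX fun x i j => ∑ y, f x y i j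

lemma expand1 {n k : ℕ} (d : Fin k → ℝ) (v : Fin k → Fin n → ℝ) :
    (fun y => ∑ i, d i * v i y) ⬝ᵥ (fun y => ∑ i, d i * v i y)
      = ∑ i, ∑ j, d i * d j * (v i ⬝ᵥ v j) := by
  have h1 : ∀ y, (∑ i, d i * v i y) * (∑ i, d i * v i y)
      = ∑ i, ∑ j, d i * d j * (v i y * v j y) := by
    intro y
    rw [Finset.sum_mul_sum]
    exact Finset.sum_congr rfl fun i _ => Finset.sum_congr rfl fun j _ => by ring
  show ∑ y, (∑ i, d i * v i y) * (∑ i, d i * v i y) = _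
  simp only [h1]
  rw [sum_rotX]
  exact Finset.sum_congr rfl fun i _ => Finset.sum_congr rfl fun j _ => by
    rw [dotProduct, Finset.mul_sum]

lemma expand2 {m n k : ℕ} (u : Fin k → Fin m → ℝ) (v : Fin k → Fin n → ℝ) :
    ∑ x, ∑ y, (∑ i, u i x * v i y) ^ 2 = ∑ i, ∑ j, (u i ⬝ᵥ u j) * (v i ⬝ᵥ v j) := by
  have h1 : ∀ x y, (∑ i, u i x * v i y) ^ 2
      = ∑ i, ∑ j, (u i x * u j x) * (v i y * v j y) := by
    intro x y
    rw [sq, Finset.sum_mul_sum]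
    exact Finset.sum_congr rfl fun i _ => Finset.sum_congr rfl fun j _ => by ring
  simp only [h1]
  rw [sum_rot2X]
  refine Finset.sum_congr rfl fun i _ => Finset.sum_congr rfl fun j _ => ?_
  rw [dotProduct, dotProduct, Finset.sum_mul_sum]

lemma onsum {n k : ℕ} (d : Fin k → ℝ) (w : Fin k → Fin n → ℝ)
    (hw : ∀ i j, w i ⬝ᵥ w j = if i = j then (1:ℝ) else 0) :
    ∑ i, ∑ j, d i * d j * (w i ⬝ᵥ w j) = ∑ i, d i ^ 2 := by
  simp [hw, mul_ite, Finset.sum_ite_eq', sq]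

lemma bessel {n q : ℕ} (b : Fin q → Fin n → ℝ)
    (hb : ∀ i j, b i ⬝ᵥ b j = if i = j then (1:ℝ) else 0) (z : Fin n → ℝ) :
    ∑ t, (b t ⬝ᵥ z) ^ 2 ≤ z ⬝ᵥ z := by
  set c := fun t => b t ⬝ᵥ z with hc
  set S := fun y => ∑ t, c t * b t y with hS
  have hSS : S ⬝ᵥ S = ∑ t, c t ^ 2 := by rw [hS, expand1, onsum c b hb]
  have hSz : S ⬝ᵥ z = ∑ t, c t ^ 2 := by
    simp only [hS, dotProduct, Finset.sum_mul]
    rw [Finset.sum_comm]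
    refine Finset.sum_congr rfl fun t _ => ?_
    rw [sq, hc]
    simp only [dotProduct, Finset.mul_sum]
    exact Finset.sum_congr rfl fun y _ => by ring
  have h0 : 0 ≤ (fun y => z y - S y) ⬝ᵥ (fun y => z y - S y) :=
    Finset.sum_nonneg fun y _ => mul_self_nonneg _
  have hexp : (fun y => z y - S y) ⬝ᵥ (fun y => z y - S y)
      = z ⬝ᵥ z - 2 * (S ⬝ᵥ z) + S ⬝ᵥ S := by
    simp only [dotProduct, Finset.mul_sum, ← Finset.sum_add_distrib,
      ← Finset.sum_sub_distrib]
    exact Finset.sum_congr rfl fun y _ => by ring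
  rw [hexp, hSz, hSS] at h0
  linarith

lemma sum_filter_lt {r k : ℕ} (h : k ≤ r) (f : Fin r → ℝ) :
    ∑ i ∈ Finset.univ.filter (fun i : Fin r => (i : ℕ) < k), f i
      = ∑ j : Fin k, f (Fin.castLE h j) := by
  refine (Finset.sum_bij' (fun (i : Fin r) hi => (⟨(i : ℕ), by
      simpa using (Finset.mem_filter.mp hi).2⟩ : Fin k))
    (fun (j : Fin k) _ => Fin.castLE h j) ?_ ?_ ?_ ?_ ?_)
  · intro i hi; exact Finset.mem_univ _
  · intro j hj
    simp [Fin.castLE, j.isLt]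
  · intro i hi; ext; rfl
  · intro j hj; ext; rfl
  · intro i hi; rfl


lemma card_filter_lt {r k : ℕ} (h : k ≤ r) :
    ((Finset.univ.filter (fun i : Fin r => (i : ℕ) < k)).card : ℝ) = k := by
  have h2 := sum_filter_lt h (fun _ => (1 : ℝ))
  simp only [Finset.sum_const, nsmul_eq_mul, mul_one, Finset.card_univ,
    Fintype.card_fin] at h2
  exact h2

lemma scalar_lemma {r : ℕ} (σ : Fin r → ℝ) (hσpos : ∀ i, 0 < σ i) (hσ : Antitone σ)
    (c : Fin r → ℝ) (hc0 : ∀ i, 0 ≤ c i) (hc1 : ∀ i, c i ≤ 1)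
    (p : ℕ) (hcp : ∑ i, c i ≤ p) :
    ∑ i, σ i ^ 2 * c i ≤ ∑ j : Fin (min p r), σ (Fin.castLE (min_le_right p r) j) ^ 2 := by
  set k := min p r with hk
  have hkr : k ≤ r := min_le_right p r
  have hkp : k ≤ p := min_le_left p r
  set τ : ℝ := if h' : k < r then σ ⟨k, h'⟩ ^ 2 else 0 with hτ
  have hτ0 : 0 ≤ τ := by
    rw [hτ]; split
    · positivity
    · exact le_rfl
  have hlow : ∀ i : Fin r, (i : ℕ) < k → τ ≤ σ i ^ 2 := by
    intro i hi
    rw [hτ]; split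
    · rename_i h'
      have h3 : σ ⟨k, h'⟩ ≤ σ i := hσ (by rw [Fin.le_def]; exact Nat.le_of_lt hi)
      have h1 : 0 < σ ⟨k, h'⟩ := hσpos _
      nlinarith
    · positivity
  have hhigh : ∀ i : Fin r, k ≤ (i : ℕ) → σ i ^ 2 ≤ τ := by
    intro i hi
    have h' : k < r := lt_of_le_of_lt hi i.isLt
    rw [hτ, dif_pos h']
    have h3 : σ i ≤ σ ⟨k, h'⟩ := hσ (by rw [Fin.le_def]; exact hi)
    have h2 : 0 < σ i := hσpos i
    nlinarith
  set s := Finset.univ.filter (fun i : Fin r => (i : ℕ) < k) with hs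
  have hsplit : ∀ f : Fin r → ℝ, ∑ i, f i = ∑ i ∈ s, f i + ∑ i ∈ sᶜ, f i :=
    fun f => (Finset.sum_add_sum_compl s f).symm
  have hcard : ((s.card : ℝ)) = k := card_filter_lt hkr
  have h1 : ∑ i ∈ s, σ i ^ 2 * c i ≤ ∑ i ∈ s, (σ i ^ 2 + τ * (c i - 1)) := by
    refine Finset.sum_le_sum fun i hi => ?_
    have hik : (i : ℕ) < k := by simpa [hs] using hi
    have := hlow i hik
    have := hc1 i
    nlinarith
  have h2 : ∑ i ∈ sᶜ, σ i ^ 2 * c i ≤ ∑ i ∈ sᶜ, τ * c i := by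
    refine Finset.sum_le_sum fun i hi => ?_
    have hik : k ≤ (i : ℕ) := by
      simp only [hs, Finset.mem_compl, Finset.mem_filter, Finset.mem_univ, true_and,
        not_lt] at hi
      exact hi
    have := hhigh i hik
    have := hc0 i
    nlinarith
  have key : ∑ i, σ i ^ 2 * c i ≤ ∑ i ∈ s, σ i ^ 2 + τ * (∑ i, c i - k) := by
    rw [hsplit (fun i => σ i ^ 2 * c i), hsplit c]
    calc ∑ i ∈ s, σ i ^ 2 * c i + ∑ i ∈ sᶜ, σ i ^ 2 * c i
        ≤ ∑ i ∈ s, (σ i ^ 2 + τ * (c i - 1)) + ∑ i ∈ sᶜ, τ * c i := by linarith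
      _ = ∑ i ∈ s, σ i ^ 2 + τ * ((∑ i ∈ s, c i + ∑ i ∈ sᶜ, c i) - k) := by
          rw [Finset.sum_add_distrib, ← Finset.mul_sum, ← Finset.mul_sum,
            Finset.sum_sub_distrib]
          rw [Finset.sum_const, nsmul_eq_mul, mul_one, ← hcard]
          ring
  have hτk : τ * (∑ i, c i - k) ≤ 0 := by
    by_cases h' : k < r
    · have hkp' : k = p := by omega
      have hd : ∑ i, c i - (k : ℝ) ≤ 0 := by
        have : ((k : ℕ) : ℝ) = (p : ℝ) := by exact_mod_cast hkp'
        linarith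
      exact mul_nonpos_of_nonneg_of_nonpos hτ0 hd
    · have hτz : τ = 0 := by rw [hτ, dif_neg h']
      rw [hτz, zero_mul]
  have hss : ∑ i ∈ s, σ i ^ 2 = ∑ j : Fin (min p r), σ (Fin.castLE (min_le_right p r) j) ^ 2 :=
    sum_filter_lt hkr _
  linarith

noncomputable def projC {m n p q : ℕ} (M : Matrix (Fin m) (Fin n) ℝ)
    (a : Fin p → Fin m → ℝ) (b : Fin q → Fin n → ℝ) : Matrix (Fin m) (Fin n) ℝ :=
  Matrix.of fun x y => ∑ s, ∑ t, (∑ x', ∑ y', a s x' * M x' y' * b t y') * (a s x * b t y)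

lemma half {m n r p q : ℕ} (M : Matrix (Fin m) (Fin n) ℝ)
    (u : Fin r → Fin m → ℝ) (v : Fin r → Fin n → ℝ) (σ : Fin r → ℝ)
    (hu : ∀ i j, u i ⬝ᵥ u j = if i = j then (1:ℝ) else 0)
    (hv : ∀ i j, v i ⬝ᵥ v j = if i = j then (1:ℝ) else 0)
    (hσpos : ∀ i, 0 < σ i) (hσ : Antitone σ)
    (hM : ∀ x y, M x y = ∑ i, σ i * u i x * v i y)
    (a : Fin p → Fin m → ℝ)
    (ha : ∀ s t, a s ⬝ᵥ a t = if s = t then (1:ℝ) else 0)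
    (b : Fin q → Fin n → ℝ)
    (hb : ∀ s t, b s ⬝ᵥ b t = if s = t then (1:ℝ) else 0) :
    ∑ x, ∑ y, (projC M a b x y) ^ 2
      ≤ ∑ j : Fin (min p r), σ (Fin.castLE (min_le_right p r) j) ^ 2 := by
  classical
  set g : Fin p → Fin n → ℝ := fun s y' => ∑ x', M x' y' * a s x' with hgdef
  set w : Fin p → Fin n → ℝ := fun s y => ∑ t, (b t ⬝ᵥ g s) * b t y with hwdef
  have hC : ∀ x y, projC M a b x y = ∑ s, a s x * w s y := by
    intro x y
    unfold projC
    simp only [Matrix.of_apply]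
    refine Finset.sum_congr rfl fun s _ => ?_
    rw [hwdef]
    simp only [Finset.mul_sum]
    refine Finset.sum_congr rfl fun t _ => ?_
    have hbg : b t ⬝ᵥ g s = ∑ x', ∑ y', a s x' * M x' y' * b t y' := by
      rw [dotProduct, hgdef]
      rw [Finset.sum_comm]
      refine Finset.sum_congr rfl fun x' _ => ?_
      simp only [Finset.mul_sum, Finset.sum_mul]
      refine Finset.sum_congr rfl fun y' _ => by ring
    rw [hbg]; ring
  have step12 : ∑ x, ∑ y, (projC M a b x y) ^ 2 = ∑ s, w s ⬝ᵥ w s := by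
    simp only [hC]
    rw [expand2 a w]
    rw [Finset.sum_comm]
    simp only [ha, ite_mul, one_mul, zero_mul]
    simp [Finset.sum_ite_eq]
  have step35 : ∀ s, w s ⬝ᵥ w s ≤ ∑ i, σ i ^ 2 * (u i ⬝ᵥ a s) ^ 2 := by
    intro s
    have h3 : w s ⬝ᵥ w s = ∑ t, (b t ⬝ᵥ g s) ^ 2 := by
      rw [hwdef]
      rw [expand1 (fun t => b t ⬝ᵥ g s) b, onsum _ b hb]
    have h4 : ∑ t, (b t ⬝ᵥ g s) ^ 2 ≤ g s ⬝ᵥ g s := bessel b hb (g s)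
    have h5 : g s ⬝ᵥ g s = ∑ i, σ i ^ 2 * (u i ⬝ᵥ a s) ^ 2 := by
      have hg : g s = fun y => ∑ i, (σ i * (u i ⬝ᵥ a s)) * v i y := by
        funext y
        rw [hgdef]
        simp only [hM, Finset.sum_mul]
        rw [Finset.sum_comm]
        refine Finset.sum_congr rfl fun i _ => ?_
        rw [dotProduct, Finset.mul_sum, Finset.sum_mul]
        exact Finset.sum_congr rfl fun x' _ => by ring
      rw [hg, expand1, onsum _ v hv]
      exact Finset.sum_congr rfl fun i _ => by ring
    rw [h3] at *
    linarith [h4, h5.le, h5.ge]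
  have step6 : ∑ x, ∑ y, (projC M a b x y) ^ 2 ≤ ∑ i, σ i ^ 2 * (∑ s, (u i ⬝ᵥ a s) ^ 2) := by
    rw [step12]
    calc ∑ s, w s ⬝ᵥ w s ≤ ∑ s, ∑ i, σ i ^ 2 * (u i ⬝ᵥ a s) ^ 2 :=
          Finset.sum_le_sum fun s _ => step35 s
      _ = ∑ i, σ i ^ 2 * (∑ s, (u i ⬝ᵥ a s) ^ 2) := by
          rw [Finset.sum_comm]
          exact Finset.sum_congr rfl fun i _ => by rw [Finset.mul_sum]
  set c : Fin r → ℝ := fun i => ∑ s, (u i ⬝ᵥ a s) ^ 2 with hcdef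
  have hc0 : ∀ i, 0 ≤ c i := fun i => Finset.sum_nonneg fun s _ => sq_nonneg _
  have hc1 : ∀ i, c i ≤ 1 := by
    intro i
    have := bessel a ha (u i)
    rw [hu i i, if_pos rfl] at this
    calc c i = ∑ s, (a s ⬝ᵥ u i) ^ 2 := by
          exact Finset.sum_congr rfl fun s _ => by rw [dotProduct_comm]
      _ ≤ 1 := this
  have hcsum : ∑ i, c i ≤ p := by
    rw [hcdef]
    rw [Finset.sum_comm]
    have : ∀ s, ∑ i, (u i ⬝ᵥ a s) ^ 2 ≤ 1 := by
      intro s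
      have := bessel u hu (a s)
      rw [show a s ⬝ᵥ a s = 1 by rw [ha s s, if_pos rfl]] at this
      exact this
    calc ∑ s, ∑ i, (u i ⬝ᵥ a s) ^ 2 ≤ ∑ s : Fin p, (1:ℝ) :=
          Finset.sum_le_sum fun s _ => this s
      _ = p := by simp
  exact le_trans step6 (scalar_lemma σ hσpos hσ c hc0 hc1 p hcsum)


lemma exists_onb {m p : ℕ} (U : Submodule ℝ (Fin m → ℝ)) (hU : Module.finrank ℝ U = p) :
    ∃ a : Fin p → (Fin m → ℝ), (∀ s t, a s ⬝ᵥ a t = if s = t then (1:ℝ) else 0) ∧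
      ∀ x ∈ U, x ∈ Submodule.span ℝ (Set.range a) := by
  classical
  set e : (Fin m → ℝ) ≃ₗ[ℝ] EuclideanSpace ℝ (Fin m) :=
    (WithLp.linearEquiv 2 ℝ (Fin m → ℝ)).symm with he
  set U' : Submodule ℝ (EuclideanSpace ℝ (Fin m)) := U.map (e : (Fin m → ℝ) →ₗ[ℝ] EuclideanSpace ℝ (Fin m)) with hU'
  have hfin : Module.finrank ℝ U' = p := (LinearEquiv.finrank_map_eq e U).trans hU
  haveI : FiniteDimensional ℝ U' := FiniteDimensional.finiteDimensional_submodule U'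
  let bb : OrthonormalBasis (Fin p) ℝ U' :=
    (stdOrthonormalBasis ℝ U').reindex (finCongr (by rw [hfin]))
  refine ⟨fun s => e.symm ((bb s : EuclideanSpace ℝ (Fin m))), ?_, ?_⟩
  · intro s t
    have h1 := bb.orthonormal
    have h2 : ⟪bb s, bb t⟫ = if s = t then (1:ℝ) else 0 := by
      rcases eq_or_ne s t with h | h
      · subst h
        rw [if_pos rfl, real_inner_self_eq_norm_sq, h1.1 s]
        norm_num
      · rw [if_neg h]; exact h1.2 h
    rw [Submodule.coe_inner, PiLp.inner_apply] at h2
    rw [← h2]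
    simp only [RCLike.inner_apply, conj_trivial]
    exact Finset.sum_congr rfl fun _ _ => mul_comm _ _
  · intro x hx
    have hx' : e x ∈ U' := Submodule.mem_map_of_mem hx
    have hspan : Submodule.span ℝ (Set.range (fun s => (bb s : EuclideanSpace ℝ (Fin m)))) = U' := by
      have := bb.toBasis.span_eq
      have h3 : Submodule.map U'.subtype (Submodule.span ℝ (Set.range bb.toBasis)) =
          Submodule.map U'.subtype ⊤ := by rw [this]
      rw [Submodule.map_span, Submodule.map_top, Submodule.range_subtype] at h3
      have himg : ⇑U'.subtype '' Set.range ⇑bb.toBasis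
          = Set.range fun s => ((bb s : EuclideanSpace ℝ (Fin m))) := by
        rw [← Set.range_comp]
        congr 1
      rw [himg] at h3
      exact h3
  -- now pull back through e
    have : e x ∈ Submodule.span ℝ (Set.range (fun s => (bb s : EuclideanSpace ℝ (Fin m)))) := by
      rw [hspan]; exact hx'
    have h4 := Submodule.mem_map_of_mem (f := (e.symm : EuclideanSpace ℝ (Fin m) →ₗ[ℝ] (Fin m → ℝ))) this
    rw [Submodule.map_span, ← Set.range_comp] at h4
    simpa [Function.comp_def] using h4

lemma frob_bilinear {m n p q : ℕ} (M : Matrix (Fin m) (Fin n) ℝ) (a : Fin p → Fin m → ℝ)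
    (b : Fin q → Fin n → ℝ) (ca : Fin p → ℝ) (cb : Fin q → ℝ) :
    ∑ x, ∑ y, M x y * ((∑ s, ca s * a s x) * (∑ t, cb t * b t y))
      = ∑ s, ∑ t, (ca s * cb t) * (∑ x, ∑ y, a s x * M x y * b t y) := by
  have h1 : ∀ x y, M x y * ((∑ s, ca s * a s x) * (∑ t, cb t * b t y))
      = ∑ s, ∑ t, (ca s * cb t) * (a s x * M x y * b t y) := by
    intro x y
    rw [Finset.sum_mul_sum, Finset.mul_sum]
    refine Finset.sum_congr rfl fun s _ => ?_
    rw [Finset.mul_sum]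
    exact Finset.sum_congr rfl fun t _ => by ring
  simp only [h1]
  rw [sum_rot2X]
  refine Finset.sum_congr rfl fun s _ => Finset.sum_congr rfl fun t _ => ?_
  rw [Finset.mul_sum]
  exact Finset.sum_congr rfl fun x _ => by rw [Finset.mul_sum]

lemma frob_decomp {m n p q : ℕ} (coef : Fin p → Fin q → ℝ) (a : Fin p → Fin m → ℝ)
    (b : Fin q → Fin n → ℝ) (w : Fin m → ℝ) (z : Fin n → ℝ) :
    ∑ x, ∑ y, (∑ s, ∑ t, coef s t * (a s x * b t y)) * (w x * z y)
      = ∑ s, ∑ t, coef s t * ((a s ⬝ᵥ w) * (b t ⬝ᵥ z)) := by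
  have h1 : ∀ x y, (∑ s, ∑ t, coef s t * (a s x * b t y)) * (w x * z y)
      = ∑ s, ∑ t, coef s t * ((a s x * w x) * (b t y * z y)) := by
    intro x y
    rw [Finset.sum_mul]
    refine Finset.sum_congr rfl fun s _ => ?_
    rw [Finset.sum_mul]
    exact Finset.sum_congr rfl fun t _ => by ring
  simp only [h1]
  rw [sum_rot2X]
  refine Finset.sum_congr rfl fun s _ => Finset.sum_congr rfl fun t _ => ?_
  rw [dotProduct, dotProduct, Finset.sum_mul_sum, Finset.mul_sum]
  refine Finset.sum_congr rfl fun x _ => ?_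
  rw [Finset.mul_sum]

lemma frob_sigma {m n r : ℕ} (σ : Fin r → ℝ) (u : Fin r → Fin m → ℝ) (v : Fin r → Fin n → ℝ)
    (w : Fin m → ℝ) (z : Fin n → ℝ) :
    ∑ x, ∑ y, (∑ i, σ i * u i x * v i y) * (w x * z y)
      = ∑ i, σ i * ((u i ⬝ᵥ w) * (v i ⬝ᵥ z)) := by
  have h1 : ∀ x y, (∑ i, σ i * u i x * v i y) * (w x * z y)
      = ∑ i, σ i * ((u i x * w x) * (v i y * z y)) := by
    intro x y
    rw [Finset.sum_mul]
    exact Finset.sum_congr rfl fun i _ => by ring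
  simp only [h1]
  have h2 : ∀ x, ∑ y, ∑ i, σ i * (u i x * w x * (v i y * z y))
      = ∑ i, ∑ y, σ i * (u i x * w x * (v i y * z y)) := fun x => Finset.sum_comm
  rw [sum_rotX, sum_rotX]
  refine Finset.sum_congr rfl fun i _ => ?_
  rw [dotProduct, dotProduct, Finset.sum_mul_sum, Finset.mul_sum]
  refine Finset.sum_congr rfl fun x _ => ?_
  rw [Finset.mul_sum]

lemma dot_lincomb {m p : ℕ} (a : Fin p → Fin m → ℝ)
    (ha : ∀ s t, a s ⬝ᵥ a t = if s = t then (1:ℝ) else 0) (c : Fin p → ℝ) (s : Fin p) :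
    a s ⬝ᵥ (fun x => ∑ s', c s' * a s' x) = c s := by
  have : a s ⬝ᵥ (fun x => ∑ s', c s' * a s' x) = ∑ s', c s' * (a s ⬝ᵥ a s') := by
    rw [dotProduct]
    have : ∀ x, a s x * (∑ s', c s' * a s' x) = ∑ s', c s' * (a s x * a s' x) := by
      intro x
      rw [Finset.mul_sum]
      exact Finset.sum_congr rfl fun s' _ => by ring
    simp only [this]
    rw [Finset.sum_comm]
    exact Finset.sum_congr rfl fun s' _ => by rw [dotProduct, Finset.mul_sum]
  rw [this]
  simp [ha, mul_ite, Finset.sum_ite_eq']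

lemma projC_trans {m n p q : ℕ} (M : Matrix (Fin m) (Fin n) ℝ) (a : Fin p → Fin m → ℝ)
    (b : Fin q → Fin n → ℝ) (x : Fin m) (y : Fin n) :
    (Matrix.of fun y x => ∑ t, ∑ s, (∑ y', ∑ x', b t y' * M.transpose y' x' * a s x') * (b t y * a s x) :
      Matrix (Fin n) (Fin m) ℝ) y x
      = (Matrix.of fun x y => ∑ s, ∑ t, (∑ x', ∑ y', a s x' * M x' y' * b t y') * (a s x * b t y) :
      Matrix (Fin m) (Fin n) ℝ) x y := by
  simp only [Matrix.of_apply, Matrix.transpose_apply]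
  rw [Finset.sum_comm]
  refine Finset.sum_congr rfl fun s _ => Finset.sum_congr rfl fun t _ => ?_
  have : (∑ y', ∑ x', b t y' * M x' y' * a s x') = ∑ x', ∑ y', a s x' * M x' y' * b t y' := by
    rw [Finset.sum_comm]
    exact Finset.sum_congr rfl fun x' _ => Finset.sum_congr rfl fun y' _ => by ring
  rw [this]
  ring


lemma projC_trans2 {m n p q : ℕ} (M : Matrix (Fin m) (Fin n) ℝ) (a : Fin p → Fin m → ℝ)
    (b : Fin q → Fin n → ℝ) :
    ∑ y, ∑ x, (projC M.transpose b a y x) ^ 2 = ∑ x, ∑ y, (projC M a b x y) ^ 2 := by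
  have h : ∀ x y, projC M.transpose b a y x = projC M a b x y := by
    intro x y
    unfold projC
    exact projC_trans M a b x y
  simp only [h]
  exact Finset.sum_comm

lemma sum_cast_eq {r : ℕ} (σ : Fin r → ℝ) {k k' : ℕ} (hk : k ≤ r) (hk' : k' ≤ r) (h : k = k') :
    ∑ j : Fin k, σ (Fin.castLE hk j) ^ 2 = ∑ j : Fin k', σ (Fin.castLE hk' j) ^ 2 := by
  subst h; rfl

lemma sum_trunc {r l : ℕ} (h : l ≤ r) (f : Fin r → ℝ) (hf : ∀ i : Fin r, l ≤ (i : ℕ) → f i = 0) :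
    ∑ i, f i = ∑ j : Fin l, f (Fin.castLE h j) := by
  rw [← sum_filter_lt h f,
    ← Finset.sum_filter_add_sum_filter_not Finset.univ (fun i : Fin r => (i : ℕ) < l) f]
  have hz : ∑ i ∈ Finset.univ.filter (fun i : Fin r => ¬ (i : ℕ) < l), f i = 0 := by
    refine Finset.sum_eq_zero fun i hi => ?_
    refine hf i ?_
    simp only [Finset.mem_filter, Finset.mem_univ, true_and, not_lt] at hi
    exact hi
  rw [hz, add_zero]

lemma inner_coords {m n : ℕ} (x y : EuclideanSpace ℝ (Fin m × Fin n)) :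
    ⟪x, y⟫ = ∑ pt, x pt * y pt := by
  rw [PiLp.inner_apply]
  simp [RCLike.inner_apply]
  exact Finset.sum_congr rfl fun _ _ => mul_comm _ _

lemma normsq_coords {m n : ℕ} (x : EuclideanSpace ℝ (Fin m × Fin n)) :
    ‖x‖ ^ 2 = ∑ pt, x pt ^ 2 := by
  rw [← real_inner_self_eq_norm_sq, inner_coords]
  exact Finset.sum_congr rfl fun pt _ => (sq _).symm

lemma dot_sum {m k : ℕ} (w : Fin m → ℝ) (c : Fin k → ℝ) (b : Fin k → Fin m → ℝ) :
    w ⬝ᵥ (fun x => ∑ j, c j * b j x) = ∑ j, c j * (w ⬝ᵥ b j) := by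
  rw [dotProduct]
  have h1 : ∀ x, w x * (∑ j, c j * b j x) = ∑ j, c j * (w x * b j x) := by
    intro x
    rw [Finset.mul_sum]
    exact Finset.sum_congr rfl fun j _ => by ring
  simp only [h1]
  rw [Finset.sum_comm]
  exact Finset.sum_congr rfl fun j _ => by rw [dotProduct, Finset.mul_sum]

lemma span_repr {m k : ℕ} (b : Fin k → Fin m → ℝ) (w : Fin m → ℝ)
    (hw : w ∈ Submodule.span ℝ (Set.range b)) :
    ∃ c : Fin k → ℝ, w = fun x => ∑ j, c j * b j x := by
  obtain ⟨c, hc⟩ := (Submodule.mem_span_range_iff_exists_fun ℝ).mp hw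
  refine ⟨c, ?_⟩
  funext x
  rw [← hc]
  simp [Finset.sum_apply]

/-- The subspace `U ⊗ V` of `m×n` matrices (vectorized as
`EuclideanSpace ℝ (Fin m × Fin n)` with the Frobenius inner product):
the span of all rank-one matrices `u vᵀ` with `u ∈ U`, `v ∈ V`. -/
noncomputable def matTensorSubspace {m n : ℕ}
    (U : Submodule ℝ (Fin m → ℝ)) (V : Submodule ℝ (Fin n → ℝ)) :
    Submodule ℝ (EuclideanSpace ℝ (Fin m × Fin n)) :=
  Submodule.span ℝ {M | ∃ u ∈ U, ∃ v ∈ V, ∀ p : Fin m × Fin n, M p = u p.1 * v p.2}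

lemma bridge {m n p q : ℕ} (M : Matrix (Fin m) (Fin n) ℝ)
    (U : Submodule ℝ (Fin m → ℝ)) (V : Submodule ℝ (Fin n → ℝ))
    (a : Fin p → Fin m → ℝ) (ha : ∀ s t, a s ⬝ᵥ a t = if s = t then (1:ℝ) else 0)
    (b : Fin q → Fin n → ℝ) (hb : ∀ s t, b s ⬝ᵥ b t = if s = t then (1:ℝ) else 0)
    (haU : ∀ x ∈ U, x ∈ Submodule.span ℝ (Set.range a))
    (hbV : ∀ x ∈ V, x ∈ Submodule.span ℝ (Set.range b))
    (B : EuclideanSpace ℝ (Fin m × Fin n)) (hB : B ∈ matTensorSubspace U V) :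
    ∑ pt : Fin m × Fin n, M pt.1 pt.2 * B pt = ∑ pt, projC M a b pt.1 pt.2 * B pt := by
  induction hB using Submodule.span_induction with
  | mem X hX =>
    obtain ⟨w, hw, z, hz, hXe⟩ := hX
    simp only [hXe]
    rw [Fintype.sum_prod_type, Fintype.sum_prod_type]
    obtain ⟨ca, hca⟩ := span_repr a w (haU w hw)
    obtain ⟨cb, hcb⟩ := span_repr b z (hbV z hz)
    have hL : ∑ x, ∑ y, M x y * (w x * z y)
        = ∑ s, ∑ t, (ca s * cb t) * (∑ x, ∑ y, a s x * M x y * b t y) := by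
      rw [hca, hcb]
      exact frob_bilinear M a b ca cb
    have hprojC : ∀ x y, projC M a b x y
        = ∑ s, ∑ t, (∑ x', ∑ y', a s x' * M x' y' * b t y') * (a s x * b t y) :=
      fun x y => rfl
    have hR : ∑ x, ∑ y, projC M a b x y * (w x * z y)
        = ∑ s, ∑ t, (∑ x', ∑ y', a s x' * M x' y' * b t y') * (ca s * cb t) := by
      simp only [hprojC]
      rw [frob_decomp]
      refine Finset.sum_congr rfl fun s _ => Finset.sum_congr rfl fun t _ => ?_
      rw [hca, hcb, dot_lincomb a ha ca s, dot_lincomb b hb cb t]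
    rw [hL, hR]
    exact Finset.sum_congr rfl fun s _ => Finset.sum_congr rfl fun t _ => by ring
  | zero => simp
  | add X Y hX hY ihX ihY =>
    have hadd : ∀ pt : Fin m × Fin n, (X + Y) pt = X pt + Y pt := fun pt => rfl
    simp only [hadd, mul_add, Finset.sum_add_distrib, ihX, ihY]
  | smul c X hX ih =>
    have hsmul : ∀ pt : Fin m × Fin n, (c • X) pt = c * X pt := fun pt => rfl
    simp only [hsmul]
    have h1 : ∑ pt : Fin m × Fin n, M pt.1 pt.2 * (c * X pt)
        = c * ∑ pt : Fin m × Fin n, M pt.1 pt.2 * X pt := by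
      rw [Finset.mul_sum]
      exact Finset.sum_congr rfl fun pt _ => by ring
    have h2 : ∑ pt : Fin m × Fin n, projC M a b pt.1 pt.2 * (c * X pt)
        = c * ∑ pt : Fin m × Fin n, projC M a b pt.1 pt.2 * X pt := by
      rw [Finset.mul_sum]
      exact Finset.sum_congr rfl fun pt _ => by ring
    rw [h1, h2, ih]

lemma part2 {m n r l : ℕ} (hlr : l ≤ r)
    (A : EuclideanSpace ℝ (Fin m × Fin n))
    (u : Fin r → (Fin m → ℝ)) (v : Fin r → (Fin n → ℝ)) (σ : Fin r → ℝ)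
    (hu : ∀ i j, u i ⬝ᵥ u j = if i = j then (1 : ℝ) else 0)
    (hv : ∀ i j, v i ⬝ᵥ v j = if i = j then (1 : ℝ) else 0)
    (hA : ∀ pt : Fin m × Fin n, A pt = ∑ i, σ i * u i pt.1 * v i pt.2) :
    ‖(Submodule.orthogonalProjection
        (matTensorSubspace
          (Submodule.span ℝ (Set.range fun j : Fin l => u (Fin.castLE hlr j)))
          (Submodule.span ℝ (Set.range fun j : Fin l => v (Fin.castLE hlr j)))) A :
        EuclideanSpace ℝ (Fin m × Fin n))‖ ^ 2
      = ∑ j : Fin l, σ (Fin.castLE hlr j) ^ 2 := by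
  classical
  set U₀ := Submodule.span ℝ (Set.range fun j : Fin l => u (Fin.castLE hlr j)) with hU₀
  set V₀ := Submodule.span ℝ (Set.range fun j : Fin l => v (Fin.castLE hlr j)) with hV₀
  set B₀ : EuclideanSpace ℝ (Fin m × Fin n) :=
    WithLp.toLp 2 (fun pt : Fin m × Fin n => ∑ j : Fin l,
      σ (Fin.castLE hlr j) * u (Fin.castLE hlr j) pt.1 * v (Fin.castLE hlr j) pt.2) with hB₀
  have hmem : B₀ ∈ matTensorSubspace U₀ V₀ := by
    have hsum : B₀ = ∑ j : Fin l, (σ (Fin.castLE hlr j)) •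
        (WithLp.toLp 2 (fun pt : Fin m × Fin n => u (Fin.castLE hlr j) pt.1 * v (Fin.castLE hlr j) pt.2) :
          EuclideanSpace ℝ (Fin m × Fin n)) := by
      ext pt
      rw [hB₀]
      simp only [PiLp.toLp_apply, WithLp.ofLp_sum, Finset.sum_apply, PiLp.smul_apply, smul_eq_mul]
      exact Finset.sum_congr rfl fun j _ => by ring
    rw [hsum]
    refine Submodule.sum_mem _ fun j _ => Submodule.smul_mem _ _ ?_
    exact Submodule.subset_span ⟨_, Submodule.subset_span (Set.mem_range_self j),
      _, Submodule.subset_span (Set.mem_range_self j), fun pt => rfl⟩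
  have horth : ∀ Bg ∈ matTensorSubspace U₀ V₀, ⟪A - B₀, Bg⟫ = 0 := by
    intro Bg hBg
    rw [inner_coords]
    induction hBg using Submodule.span_induction with
    | mem X hX =>
      obtain ⟨w, hw, z, hz, hXe⟩ := hX
      simp only [hXe]
      have hsub : ∀ pt : Fin m × Fin n, (A - B₀) pt = A pt - B₀ pt := fun pt => rfl
      simp only [hsub, sub_mul, Finset.sum_sub_distrib]
      rw [Fintype.sum_prod_type]
      simp only [hA, hB₀, PiLp.toLp_apply]
      rw [frob_sigma]
      have hBB : ∑ pt : Fin m × Fin n,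
          (∑ j : Fin l, σ (Fin.castLE hlr j) * u (Fin.castLE hlr j) pt.1
            * v (Fin.castLE hlr j) pt.2) * (w pt.1 * z pt.2)
          = ∑ j : Fin l, σ (Fin.castLE hlr j)
              * ((u (Fin.castLE hlr j) ⬝ᵥ w) * (v (Fin.castLE hlr j) ⬝ᵥ z)) := by
        rw [Fintype.sum_prod_type]
        exact frob_sigma _ _ _ w z
      rw [hBB]
      obtain ⟨c, hc⟩ := span_repr _ w hw
      have hzero : ∀ i : Fin r, l ≤ (i : ℕ) → u i ⬝ᵥ w = 0 := by
        intro i hi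
        rw [hc, dot_sum]
        refine Finset.sum_eq_zero fun j _ => ?_
        rw [hu, if_neg, mul_zero]
        intro hij
        have hval : (i : ℕ) = (j : ℕ) := congrArg Fin.val hij
        have := j.isLt
        omega
      rw [sum_trunc hlr (fun i => σ i * ((u i ⬝ᵥ w) * (v i ⬝ᵥ z)))
        (fun i hi => by simp only [hzero i hi, zero_mul, mul_zero])]
      exact sub_self _
    | zero => simp
    | add X Y hX hY ihX ihY =>
      have hadd : ∀ pt : Fin m × Fin n, (X + Y) pt = X pt + Y pt := fun pt => rfl
      simp only [hadd, mul_add, Finset.sum_add_distrib, ihX, ihY, add_zero]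
    | smul c X hX ih =>
      have hsmul : ∀ pt : Fin m × Fin n, (c • X) pt = c * X pt := fun pt => rfl
      simp only [hsmul]
      have h1 : ∑ pt : Fin m × Fin n, (A - B₀) pt * (c * X pt)
          = c * ∑ pt : Fin m × Fin n, (A - B₀) pt * X pt := by
        rw [Finset.mul_sum]
        exact Finset.sum_congr rfl fun pt _ => by ring
      rw [h1, ih, mul_zero]
  have hproj : (Submodule.orthogonalProjection (matTensorSubspace U₀ V₀) A :
      EuclideanSpace ℝ (Fin m × Fin n)) = B₀ :=
    Submodule.eq_starProjection_of_mem_of_inner_eq_zero hmem horth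
  rw [hproj, normsq_coords, Fintype.sum_prod_type]
  have hform : ∀ (x : Fin m) (y : Fin n), B₀ (x, y)
      = ∑ j, (σ (Fin.castLE hlr j) * u (Fin.castLE hlr j) x) * (v (Fin.castLE hlr j) y) := by
    intro x y
    rw [hB₀]
  simp only [hform]
  rw [expand2]
  have key : ∀ j j' : Fin l,
      ((fun x => σ (Fin.castLE hlr j) * u (Fin.castLE hlr j) x)
        ⬝ᵥ (fun x => σ (Fin.castLE hlr j') * u (Fin.castLE hlr j') x))
        * (v (Fin.castLE hlr j) ⬝ᵥ v (Fin.castLE hlr j'))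
      = if j = j' then σ (Fin.castLE hlr j) ^ 2 else 0 := by
    intro j j'
    have h1 : ((fun x => σ (Fin.castLE hlr j) * u (Fin.castLE hlr j) x)
        ⬝ᵥ (fun x => σ (Fin.castLE hlr j') * u (Fin.castLE hlr j') x))
        = σ (Fin.castLE hlr j) * σ (Fin.castLE hlr j') * (u (Fin.castLE hlr j) ⬝ᵥ u (Fin.castLE hlr j')) := by
      simp only [dotProduct]
      rw [Finset.mul_sum]
      exact Finset.sum_congr rfl fun x _ => by ring
    rw [h1, hu, hv]
    have hcast : (Fin.castLE hlr j = Fin.castLE hlr j') ↔ j = j' := by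
      constructor
      · intro h
        have := congrArg Fin.val h
        exact Fin.ext this
      · intro h; rw [h]
    rcases eq_or_ne j j' with h | h
    · subst h
      simp [sq]
    · rw [if_neg h, if_neg (fun hh => h (hcast.mp hh))]
      ring
  simp only [key]
  simp

/-- let `A = ∑ᵢ σᵢ uᵢ vᵢᵀ` be a singular value decomposition of a
rank-`r` matrix `A` (orthonormal `uᵢ`, `vᵢ`, positive decreasing `σᵢ`).  For any
subspaces `U` of dimension `p` and `V` of dimension `q`, the squared Frobenius
norm of the projection of `A` onto `U ⊗ V` is at most `σ₁² + ⋯ + σ_l²` where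
`l = min(p, q, r)`; equality holds when `U`, `V` are spanned by the first `l`
left and right singular vectors. -/
theorem stmt7 (m n r p q : ℕ)
    (A : EuclideanSpace ℝ (Fin m × Fin n))
    (u : Fin r → (Fin m → ℝ)) (v : Fin r → (Fin n → ℝ)) (σ : Fin r → ℝ)
    (hu : ∀ i j, u i ⬝ᵥ u j = if i = j then (1 : ℝ) else 0)
    (hv : ∀ i j, v i ⬝ᵥ v j = if i = j then (1 : ℝ) else 0)
    (hσpos : ∀ i, 0 < σ i) (hσ : Antitone σ)
    (hA : ∀ pt : Fin m × Fin n, A pt = ∑ i, σ i * u i pt.1 * v i pt.2)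
    (hrank : (Matrix.of fun i j => A (i, j)).rank = r) :
    (∀ U : Submodule ℝ (Fin m → ℝ), ∀ V : Submodule ℝ (Fin n → ℝ),
      Module.finrank ℝ U = p → Module.finrank ℝ V = q →
      ‖(Submodule.orthogonalProjection (matTensorSubspace U V) A : EuclideanSpace ℝ (Fin m × Fin n))‖ ^ 2
        ≤ ∑ i : Fin (min p (min q r)),
            σ (Fin.castLE (le_trans (min_le_right p (min q r)) (min_le_right q r)) i) ^ 2) ∧
    ‖(Submodule.orthogonalProjection
        (matTensorSubspace
          (Submodule.span ℝ (Set.range fun i : Fin (min p (min q r)) =>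
            u (Fin.castLE (le_trans (min_le_right p (min q r)) (min_le_right q r)) i)))
          (Submodule.span ℝ (Set.range fun i : Fin (min p (min q r)) =>
            v (Fin.castLE (le_trans (min_le_right p (min q r)) (min_le_right q r)) i)))) A :
        EuclideanSpace ℝ (Fin m × Fin n))‖ ^ 2
      = ∑ i : Fin (min p (min q r)),
          σ (Fin.castLE (le_trans (min_le_right p (min q r)) (min_le_right q r)) i) ^ 2 := by
  have hlr : min p (min q r) ≤ r := le_trans (min_le_right p (min q r)) (min_le_right q r)
  constructor
  · intro U V hU hV
    obtain ⟨a, ha, haU⟩ := exists_onb U hU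
    obtain ⟨b, hb, hbV⟩ := exists_onb V hV
    set M : Matrix (Fin m) (Fin n) ℝ := Matrix.of fun x y => ∑ i, σ i * u i x * v i y with hM
    have hMe : ∀ x y, M x y = ∑ i, σ i * u i x * v i y := fun x y => rfl
    have hMA : ∀ pt : Fin m × Fin n, A pt = M pt.1 pt.2 := fun pt => hA pt
    set B : EuclideanSpace ℝ (Fin m × Fin n) :=
      (Submodule.orthogonalProjection (matTensorSubspace U V) A : EuclideanSpace ℝ (Fin m × Fin n)) with hB
    have hBmem : B ∈ matTensorSubspace U V := SetLike.coe_mem _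
    have hIP : ⟪A, B⟫ = ‖B‖ ^ 2 := by
      have h0 : ⟪A - B, B⟫ = 0 := Submodule.starProjection_inner_eq_zero A B hBmem
      rw [inner_sub_left] at h0
      rw [← real_inner_self_eq_norm_sq]
      linarith
    have key : ‖B‖ ^ 2 = ∑ pt : Fin m × Fin n, projC M a b pt.1 pt.2 * B pt := by
      rw [← hIP, inner_coords]
      calc ∑ pt : Fin m × Fin n, A pt * B pt
          = ∑ pt : Fin m × Fin n, M pt.1 pt.2 * B pt := by
            exact Finset.sum_congr rfl fun pt _ => by rw [hMA]
        _ = _ := bridge M U V a ha b hb haU hbV B hBmem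
    have hCsq : ∑ pt : Fin m × Fin n, projC M a b pt.1 pt.2 ^ 2
        = ∑ x, ∑ y, projC M a b x y ^ 2 := Fintype.sum_prod_type _
    have hCS : (‖B‖ ^ 2) ^ 2 ≤ (∑ x, ∑ y, projC M a b x y ^ 2) * ‖B‖ ^ 2 := by
      have hBsum : ∑ pt : Fin m × Fin n, B pt ^ 2 = ‖B‖ ^ 2 := (normsq_coords B).symm
      calc (‖B‖ ^ 2) ^ 2 = (∑ pt : Fin m × Fin n, projC M a b pt.1 pt.2 * B pt) ^ 2 := by
            rw [key]
        _ ≤ (∑ pt : Fin m × Fin n, projC M a b pt.1 pt.2 ^ 2) *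
              ∑ pt : Fin m × Fin n, B pt ^ 2 :=
            Finset.sum_mul_sq_le_sq_mul_sq _ _ _
        _ = (∑ x, ∑ y, projC M a b x y ^ 2) * ‖B‖ ^ 2 := by rw [hBsum, hCsq]
    have k1 := half M u v σ hu hv hσpos hσ hMe a ha b hb
    have hMT : ∀ y x, M.transpose y x = ∑ i, σ i * v i y * u i x := by
      intro y x
      rw [Matrix.transpose_apply, hMe]
      exact Finset.sum_congr rfl fun i _ => by ring
    have k2pre := half M.transpose v u σ hv hu hσpos hσ hMT b hb a ha
    rw [projC_trans2 M a b] at k2pre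
    have hbound : ∑ x, ∑ y, projC M a b x y ^ 2
        ≤ ∑ i : Fin (min p (min q r)), σ (Fin.castLE hlr i) ^ 2 := by
      rcases le_total (min p r) (min q r) with hle | hle
      · have hmm : min p r = min p (min q r) := by omega
        exact le_trans k1 (le_of_eq (sum_cast_eq σ (min_le_right p r) hlr hmm))
      · have hmm : min q r = min p (min q r) := by omega
        exact le_trans k2pre (le_of_eq (sum_cast_eq σ (min_le_right q r) hlr hmm))
    have hSnn : (0:ℝ) ≤ ∑ i : Fin (min p (min q r)), σ (Fin.castLE hlr i) ^ 2 :=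
      Finset.sum_nonneg fun i _ => sq_nonneg _
    show ‖B‖ ^ 2 ≤ _
    rcases eq_or_lt_of_le (sq_nonneg ‖B‖) with hz | hpos
    · rw [← hz]; exact hSnn
    · nlinarith [hCS, hbound, hpos]
  · exact part2 hlr A u v σ hu hv hA
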